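/- Let M = (E, I) be a matroid whose ground set is partitioned among n players, let w : E → ℝ≥0 be weights defining additive valuations v_i(X) = Σ_{t∈X} w_t for X ⊆ E_i, and let S* ∈ I maximize Σ_{t∈S*} w_t over I. Let b : E → ℝ≥0 be any bid profile and let S ∈ I maximize Σ_{t∈S} b_t over I. For each player i let b^i be the bid profile with b^i_t = (2/3)·w_t for t ∈ E_i and b^i_t = b_t for t ∉ E_i, and let S^i ∈ I be any set maximizing Σ_{t∈S^i} b^i_t over I. Then Σ_{i=1}^n Σ_{t ∈ S^i ∩ E_i} (w_t − (2/3)·w_t) ≥ (1/3)·Σ_{t∈S*} w_t − Σ_{t∈S} b_t. (That is, the greedy first-price matroid mechanism is (1/3,1)-smooth for additive valuations, witnessed by each player deviating to bidding two thirds of her values.) -/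

import Mathlib

/-- A matroid on a finite ground set, given by its family of independent sets. -/
structure FinMatroid (E : Type*) [DecidableEq E] [Fintype E] where
  Indep : Finset E → Prop
  empty_indep : Indep ∅
  indep_subset : ∀ ⦃A B : Finset E⦄, Indep B → A ⊆ B → Indep A
  indep_exchange : ∀ ⦃A B : Finset E⦄, Indep A → Indep B → A.card < B.card →
    ∃ x ∈ B \ A, Indep (insert x A)

namespace FinMatroid

variable {E : Type*} [DecidableEq E] [Fintype E] (M : FinMatroid E)

/-- Augmentation: an independent set `A` can be grown inside `A ∪ B` to an independent set of
size `max |A| |B|`. -/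
lemma augment : ∀ (k : ℕ) (A B : Finset E), M.Indep A → M.Indep B → B.card - A.card ≤ k →
    ∃ C, M.Indep C ∧ A ⊆ C ∧ C ⊆ A ∪ B ∧ B.card ≤ C.card ∧ C.card ≤ max A.card B.card := by
  intro k
  induction k with
  | zero =>
    intro A B hA hB h
    exact ⟨A, hA, subset_rfl, Finset.subset_union_left, by omega, le_max_left _ _⟩
  | succ k ih =>
    intro A B hA hB h
    by_cases hc : B.card ≤ A.card
    · exact ⟨A, hA, subset_rfl, Finset.subset_union_left, hc, le_max_left _ _⟩
    · push_neg at hc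
      obtain ⟨x, hx, hxi⟩ := M.indep_exchange hA hB hc
      rw [Finset.mem_sdiff] at hx
      have hcard : (insert x A).card = A.card + 1 := Finset.card_insert_of_notMem hx.2
      obtain ⟨C, h1, h2, h3, h4, h5⟩ := ih (insert x A) B hxi hB (by omega)
      refine ⟨C, h1, (Finset.subset_insert x A).trans h2, h3.trans ?_, h4, ?_⟩
      · rw [Finset.insert_union, Finset.insert_eq_self.mpr (Finset.mem_union_right _ hx.1)]
      · rw [hcard, max_eq_right (by omega : A.card + 1 ≤ B.card)] at h5
        exact le_max_of_le_right h5

/-- If `S` is a max-weight independent set for weights `c` and `θ > 0`, then any independent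
set all of whose elements have weight at least `θ` is no larger than the part of `S` of
weight at least `θ`. -/
lemma count_le (c : E → ℝ) (S : Finset E) (hS : M.Indep S)
    (hopt : ∀ S', M.Indep S' → ∑ t ∈ S', c t ≤ ∑ t ∈ S, c t)
    (θ : ℝ) (hθ : 0 < θ) (X : Finset E) (hX : M.Indep X) (hXF : ∀ x ∈ X, θ ≤ c x) :
    X.card ≤ (S.filter (fun t => θ ≤ c t)).card := by
  classical
  by_contra hcon
  push_neg at hcon
  set A0 := S.filter (fun t => θ ≤ c t) with hA0
  have hA0S : A0 ⊆ S := Finset.filter_subset _ _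
  have hA0i : M.Indep A0 := M.indep_subset hS hA0S
  obtain ⟨x, hx, hxi⟩ := M.indep_exchange hA0i hX hcon
  rw [Finset.mem_sdiff] at hx
  have hxc : θ ≤ c x := hXF x hx.1
  have hxS : x ∉ S := fun hxS => hx.2 (Finset.mem_filter.mpr ⟨hxS, hxc⟩)
  by_cases hle : A0.card + 1 ≤ S.card
  · obtain ⟨C, hCi, hAC, hCsub, hBC, hCmax⟩ :=
      M.augment S.card (insert x A0) S hxi hS (by omega)
    have hCsub' : C ⊆ insert x S := by
      refine hCsub.trans ?_
      intro y hy
      rcases Finset.mem_union.mp hy with h | h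
      · rcases Finset.mem_insert.mp h with h | h
        · exact h ▸ Finset.mem_insert_self _ _
        · exact Finset.mem_insert_of_mem (hA0S h)
      · exact Finset.mem_insert_of_mem h
    have hxC : x ∈ C := hAC (Finset.mem_insert_self _ _)
    have hicard : (insert x A0).card = A0.card + 1 := Finset.card_insert_of_notMem hx.2
    have hCcard : C.card = S.card := by
      rw [hicard, max_eq_right hle] at hCmax
      omega
    have hCS : C ∩ S = C.erase x := by
      ext z
      simp only [Finset.mem_inter, Finset.mem_erase]
      constructor
      · rintro ⟨hzC, hzS⟩
        exact ⟨fun h => hxS (h ▸ hzS), hzC⟩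
      · rintro ⟨hzx, hzC⟩
        rcases Finset.mem_insert.mp (hCsub' hzC) with h | h
        · exact absurd h hzx
        · exact ⟨hzC, h⟩
    have hcCS : (C ∩ S).card = S.card - 1 := by
      rw [hCS, Finset.card_erase_of_mem hxC, hCcard]
    have hSC : (S \ C).card = 1 := by
      have := Finset.card_inter_add_card_sdiff S C
      rw [Finset.inter_comm] at this
      omega
    obtain ⟨y, hy⟩ := Finset.card_eq_one.mp hSC
    have hyS : y ∈ S := by
      have : y ∈ S \ C := hy ▸ Finset.mem_singleton_self y
      exact (Finset.mem_sdiff.mp this).1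
    have hyC : y ∉ C := by
      have : y ∈ S \ C := hy ▸ Finset.mem_singleton_self y
      exact (Finset.mem_sdiff.mp this).2
    have hyA0 : y ∉ A0 := fun h => hyC (hAC (Finset.mem_insert_of_mem h))
    have hyc : c y < θ := by
      by_contra hcy
      push_neg at hcy
      exact hyA0 (Finset.mem_filter.mpr ⟨hyS, hcy⟩)
    have hCeq : C = insert x (S.erase y) := by
      apply Finset.eq_of_subset_of_card_le
      · intro z hz
        rcases Finset.mem_insert.mp (hCsub' hz) with h | h
        · exact h ▸ Finset.mem_insert_self _ _
        · refine Finset.mem_insert_of_mem (Finset.mem_erase.mpr ⟨?_, h⟩)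
          rintro rfl
          exact hyC hz
      · rw [Finset.card_insert_of_notMem (fun h => hxS (Finset.mem_of_mem_erase h)),
          Finset.card_erase_of_mem hyS, hCcard]
        omega
    have hsum := hopt C hCi
    rw [hCeq, Finset.sum_insert (fun h => hxS (Finset.mem_of_mem_erase h)),
      ← Finset.add_sum_erase S c hyS] at hsum
    linarith
  · have hA0card : A0 = S := Finset.eq_of_subset_of_card_le hA0S (by omega)
    have hins : M.Indep (insert x S) := by rw [← hA0card]; exact hxi
    have := hopt _ hins
    rw [Finset.sum_insert hxS] at this
    linarith

end FinMatroid

/-- Discrete layer-cake comparison: if the superlevel sets of `f` on `A` are dominated in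
cardinality by those of `g` on `B` (for every positive threshold), then the sums compare. -/
lemma layer_sum_le {α β : Type*} [DecidableEq α] [DecidableEq β] :
    ∀ (k : ℕ) (A : Finset α) (B : Finset β) (f : α → ℝ) (g : β → ℝ),
    A.card ≤ k → (∀ a ∈ A, 0 ≤ f a) → (∀ x ∈ B, 0 ≤ g x) →
    (∀ θ : ℝ, 0 < θ →
      (A.filter (fun a => θ ≤ f a)).card ≤ (B.filter (fun x => θ ≤ g x)).card) →
    ∑ a ∈ A, f a ≤ ∑ x ∈ B, g x := by
  classical
  intro k
  induction k with
  | zero =>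
    intro A B f g hk hf hg h
    have : A = ∅ := Finset.card_eq_zero.mp (by omega)
    subst this
    simpa using Finset.sum_nonneg hg
  | succ k ih =>
    intro A B f g hk hf hg h
    rcases Finset.eq_empty_or_nonempty A with rfl | hA
    · simpa using Finset.sum_nonneg hg
    obtain ⟨a, haA, hamax⟩ := Finset.exists_max_image A f hA
    by_cases hfa : f a ≤ 0
    · have h1 : ∑ x ∈ A, f x ≤ 0 :=
        Finset.sum_nonpos (fun x hx => le_trans (hamax x hx) hfa)
      have h2 : (0:ℝ) ≤ ∑ x ∈ B, g x := Finset.sum_nonneg hg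
      linarith
    push_neg at hfa
    have hcard : 1 ≤ (B.filter (fun x => f a ≤ g x)).card := by
      have h1 := h (f a) hfa
      have haf : a ∈ A.filter (fun t => f a ≤ f t) := Finset.mem_filter.mpr ⟨haA, le_refl _⟩
      have h2 : 1 ≤ (A.filter (fun t => f a ≤ f t)).card := Finset.card_pos.mpr ⟨a, haf⟩
      omega
    obtain ⟨x, hx⟩ := Finset.card_pos.mp
      (show 0 < (B.filter (fun y => f a ≤ g y)).card by omega)
    rw [Finset.mem_filter] at hx
    have key : ∀ θ : ℝ, 0 < θ →
        ((A.erase a).filter (fun t => θ ≤ f t)).card ≤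
          ((B.erase x).filter (fun y => θ ≤ g y)).card := by
      intro θ hθ
      rw [Finset.filter_erase, Finset.filter_erase]
      by_cases hθa : θ ≤ f a
      · have haf : a ∈ A.filter (fun t => θ ≤ f t) := Finset.mem_filter.mpr ⟨haA, hθa⟩
        have hxf : x ∈ B.filter (fun y => θ ≤ g y) :=
          Finset.mem_filter.mpr ⟨hx.1, le_trans hθa hx.2⟩
        rw [Finset.card_erase_of_mem haf, Finset.card_erase_of_mem hxf]
        have := h θ hθ
        omega
      · have : A.filter (fun t => θ ≤ f t) = ∅ := by
          apply Finset.filter_eq_empty_iff.mpr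
          intro t ht hc
          exact hθa (le_trans hc (hamax t ht))
        rw [this]
        simp
    have hih := ih (A.erase a) (B.erase x) f g
      (by rw [Finset.card_erase_of_mem haA]; omega)
      (fun t ht => hf t (Finset.mem_of_mem_erase ht))
      (fun y hy => hg y (Finset.mem_of_mem_erase hy)) key
    have hsA : ∑ t ∈ A, f t = f a + ∑ t ∈ A.erase a, f t := (Finset.add_sum_erase A f haA).symm
    have hsB : ∑ y ∈ B, g y = g x + ∑ y ∈ B.erase x, g y := (Finset.add_sum_erase B g hx.1).symm
    rw [hsA, hsB]
    linarith [hx.2]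

lemma filter_disjSum' {α β : Type*} (s : Finset α) (t : Finset β) (p : α ⊕ β → Prop)
    [DecidablePred p] :
    (s.disjSum t).filter p =
      (s.filter (fun a => p (Sum.inl a))).disjSum (t.filter (fun b => p (Sum.inr b))) := by
  ext x
  cases x with
  | inl a => simp
  | inr b => simp

theorem greedy_matroid_smooth_additive
    {E : Type*} [DecidableEq E] [Fintype E] (M : FinMatroid E)
    (n : ℕ) (player : E → Fin n)
    (w : E → ℝ) (hw : ∀ t, 0 ≤ w t)
    (Sstar : Finset E) (hSstar : M.Indep Sstar)
    (hSstarOpt : ∀ S : Finset E, M.Indep S → ∑ t ∈ S, w t ≤ ∑ t ∈ Sstar, w t)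
    (b : E → ℝ) (hb : ∀ t, 0 ≤ b t)
    (S : Finset E) (hS : M.Indep S)
    (hSOpt : ∀ S' : Finset E, M.Indep S' → ∑ t ∈ S', b t ≤ ∑ t ∈ S, b t)
    (Sdev : Fin n → Finset E) (hSdev : ∀ i, M.Indep (Sdev i))
    (hSdevOpt : ∀ i, ∀ S' : Finset E, M.Indep S' →
      (∑ t ∈ S', if player t = i then (2/3) * w t else b t) ≤
        ∑ t ∈ Sdev i, if player t = i then (2/3) * w t else b t) :
    (∑ i : Fin n, ∑ t ∈ (Sdev i).filter (fun t => player t = i), (w t - (2/3) * w t)) ≥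
      (1/3) * (∑ t ∈ Sstar, w t) - ∑ t ∈ S, b t := by
  classical
  set P : Finset E := Finset.univ.filter (fun t => t ∈ Sdev (player t)) with hPdef
  -- The key combinatorial counting inequality, for every positive threshold θ.
  have key : ∀ θ : ℝ, 0 < θ →
      (Sstar.filter (fun t => θ ≤ 2/3 * w t)).card ≤
        (P.filter (fun t => θ ≤ 2/3 * w t)).card +
          ((S.filter (fun t => θ ≤ b t)).card + (S.filter (fun t => θ ≤ b t)).card) := by
    intro θ hθ
    set Bθ := S.filter (fun t => θ ≤ b t) with hBθ
    have hBθS : Bθ ⊆ S := Finset.filter_subset _ _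
    have hBθi : M.Indep Bθ := M.indep_subset hS hBθS
    have hGbound : ∀ X : Finset E, M.Indep X → (∀ x ∈ X, θ ≤ b x) → X.card ≤ Bθ.card :=
      fun X hX hXF => M.count_le b S hS hSOpt θ hθ X hX hXF
    -- a maximum-cardinality independent subset of `W ∪ G` containing `Bθ`
    set WG : Finset E := Finset.univ.filter (fun t => θ ≤ 2/3 * w t ∨ θ ≤ b t) with hWG
    set fam : Finset (Finset E) := WG.powerset.filter (fun J => M.Indep J ∧ Bθ ⊆ J) with hfam
    have hBfam : Bθ ∈ fam := by
      refine Finset.mem_filter.mpr ⟨Finset.mem_powerset.mpr ?_, hBθi, subset_rfl⟩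
      intro t ht
      exact Finset.mem_filter.mpr ⟨Finset.mem_univ _, Or.inr (Finset.mem_filter.mp ht).2⟩
    obtain ⟨J, hJfam, hJmax⟩ := Finset.exists_max_image fam Finset.card ⟨Bθ, hBfam⟩
    rw [Finset.mem_filter, Finset.mem_powerset] at hJfam
    obtain ⟨hJWG, hJi, hBJ⟩ := hJfam
    -- elements of `J` outside `Bθ` have large `w`-weight
    have hJu : ∀ t ∈ J, t ∉ Bθ → θ ≤ 2/3 * w t := by
      intro t htJ htB
      rcases (Finset.mem_filter.mp (hJWG htJ)).2 with h | h
      · exact h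
      · exfalso
        have hins : M.Indep (insert t Bθ) :=
          M.indep_subset hJi (Finset.insert_subset htJ hBJ)
        have hbound := hGbound (insert t Bθ) hins (by
          intro x hxm
          rcases Finset.mem_insert.mp hxm with rfl | hxm
          · exact h
          · exact (Finset.mem_filter.mp hxm).2)
        rw [Finset.card_insert_of_notMem htB] at hbound
        omega
    -- the θ-superlevel part of Sstar is at most |J|
    have hK : (Sstar.filter (fun t => θ ≤ 2/3 * w t)).card ≤ J.card := by
      by_contra hcon
      push_neg at hcon
      have hKi : M.Indep (Sstar.filter (fun t => θ ≤ 2/3 * w t)) :=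
        M.indep_subset hSstar (Finset.filter_subset _ _)
      obtain ⟨x, hxm, hxi⟩ := M.indep_exchange hJi hKi hcon
      rw [Finset.mem_sdiff, Finset.mem_filter] at hxm
      have hfam' : insert x J ∈ fam := by
        refine Finset.mem_filter.mpr ⟨Finset.mem_powerset.mpr ?_, hxi,
          hBJ.trans (Finset.subset_insert _ _)⟩
        refine Finset.insert_subset ?_ hJWG
        exact Finset.mem_filter.mpr ⟨Finset.mem_univ _, Or.inl hxm.1.2⟩
      have := hJmax _ hfam'
      rw [Finset.card_insert_of_notMem hxm.2] at this
      omega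
    -- per-player bound
    have hper : ∀ i : Fin n,
        ((J \ Bθ).filter (fun t => player t = i)).card ≤
          ((Sdev i).filter (fun t => player t = i ∧ θ ≤ 2/3 * w t)).card +
            (Bθ.filter (fun t => player t = i)).card := by
      intro i
      set Xi := ((J \ Bθ).filter (fun t => player t = i)) ∪
        (Bθ.filter (fun t => ¬ player t = i)) with hXidef
      have hXiJ : Xi ⊆ J := by
        apply Finset.union_subset
        · exact (Finset.filter_subset _ _).trans (Finset.sdiff_subset)
        · exact (Finset.filter_subset _ _).trans hBJ
      have hXii : M.Indep Xi := M.indep_subset hJi hXiJ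
      have hXiF : ∀ x ∈ Xi, θ ≤ (fun t => if player t = i then (2/3) * w t else b t) x := by
        intro x hxm
        rcases Finset.mem_union.mp hxm with h | h
        · rw [Finset.mem_filter, Finset.mem_sdiff] at h
          simp only [h.2, if_pos]
          exact hJu x h.1.1 h.1.2
        · rw [Finset.mem_filter] at h
          simp only [h.2, if_neg, if_false]
          exact (Finset.mem_filter.mp h.1).2
      have h1 : Xi.card ≤ ((Sdev i).filter
          (fun t => θ ≤ if player t = i then (2/3) * w t else b t)).card :=
        M.count_le _ (Sdev i) (hSdev i) (hSdevOpt i) θ hθ Xi hXii hXiF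
      have hsplit : (Sdev i).filter (fun t => θ ≤ if player t = i then (2/3) * w t else b t) =
          ((Sdev i).filter (fun t => player t = i ∧ θ ≤ 2/3 * w t)) ∪
            ((Sdev i).filter (fun t => ¬ player t = i ∧ θ ≤ b t)) := by
        rw [← Finset.filter_or]
        apply Finset.filter_congr
        intro t _
        by_cases hpt : player t = i <;> simp [hpt]
      have hdisj2 : Disjoint ((Sdev i).filter (fun t => player t = i ∧ θ ≤ 2/3 * w t))
          ((Sdev i).filter (fun t => ¬ player t = i ∧ θ ≤ b t)) := by
        rw [Finset.disjoint_left]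
        intro t ht1 ht2
        exact (Finset.mem_filter.mp ht2).2.1 (Finset.mem_filter.mp ht1).2.1
      have hY : ((Sdev i).filter (fun t => ¬ player t = i ∧ θ ≤ b t)).card ≤ Bθ.card := by
        apply hGbound
        · exact M.indep_subset (hSdev i) (Finset.filter_subset _ _)
        · intro x hxm
          exact (Finset.mem_filter.mp hxm).2.2
      have hXic : Xi.card = ((J \ Bθ).filter (fun t => player t = i)).card +
          (Bθ.filter (fun t => ¬ player t = i)).card := by
        rw [hXidef]
        apply Finset.card_union_of_disjoint
        rw [Finset.disjoint_left]
        intro t ht1 ht2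
        exact (Finset.mem_sdiff.mp (Finset.mem_filter.mp ht1).1).2 (Finset.mem_filter.mp ht2).1
      have hBsplit : (Bθ.filter (fun t => player t = i)).card +
          (Bθ.filter (fun t => ¬ player t = i)).card = Bθ.card :=
        Finset.card_filter_add_card_filter_not _
      rw [hsplit, Finset.card_union_of_disjoint hdisj2] at h1
      omega
    -- sum the per-player bounds over all players
    have hsum1 : (J \ Bθ).card =
        ∑ i : Fin n, ((J \ Bθ).filter (fun t => player t = i)).card :=
      Finset.card_eq_sum_card_fiberwise (fun x _ => Finset.mem_univ (player x))
    have hsum2 : Bθ.card = ∑ i : Fin n, (Bθ.filter (fun t => player t = i)).card :=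
      Finset.card_eq_sum_card_fiberwise (fun x _ => Finset.mem_univ (player x))
    have hsum3 : (P.filter (fun t => θ ≤ 2/3 * w t)).card =
        ∑ i : Fin n, ((Sdev i).filter (fun t => player t = i ∧ θ ≤ 2/3 * w t)).card := by
      rw [Finset.card_eq_sum_card_fiberwise
        (f := player) (t := Finset.univ) (fun x _ => Finset.mem_univ (player x))]
      apply Finset.sum_congr rfl
      intro i _
      congr 1
      ext t
      simp only [Finset.mem_filter, hPdef, Finset.mem_univ, true_and]
      constructor
      · rintro ⟨⟨hdev, hut⟩, hpi⟩
        exact ⟨hpi ▸ hdev, hpi, hut⟩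
      · rintro ⟨hdev, hpi, hut⟩
        exact ⟨⟨hpi ▸ hdev, hut⟩, hpi⟩
    have htot : ∑ i : Fin n, ((J \ Bθ).filter (fun t => player t = i)).card ≤
        (∑ i : Fin n, ((Sdev i).filter (fun t => player t = i ∧ θ ≤ 2/3 * w t)).card) +
          ∑ i : Fin n, (Bθ.filter (fun t => player t = i)).card := by
      rw [← Finset.sum_add_distrib]
      exact Finset.sum_le_sum (fun i _ => hper i)
    have hJcard : J.card = Bθ.card + (J \ Bθ).card := by
      have h1 := Finset.card_sdiff_of_subset hBJ
      have h2 := Finset.card_le_card hBJ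
      omega
    omega
  -- Deduce the sum inequality from the counting inequality by the layer-cake lemma.
  have hmain : ∑ t ∈ Sstar, 2/3 * w t ≤
      ∑ t ∈ P, 2/3 * w t + (∑ t ∈ S, b t + ∑ t ∈ S, b t) := by
    have happ := layer_sum_le Sstar.card Sstar (P.disjSum (S.disjSum S))
      (fun t => 2/3 * w t) (Sum.elim (fun t => 2/3 * w t) (Sum.elim b b)) le_rfl
      (fun t _ => mul_nonneg (by norm_num) (hw t))
      (by
        rintro (x | x | x) _
        · exact mul_nonneg (by norm_num) (hw x)
        · exact hb x
        · exact hb x)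
      (by
        intro θ hθ
        rw [filter_disjSum', filter_disjSum', Finset.card_disjSum, Finset.card_disjSum]
        convert key θ hθ using 3 <;> rfl)
    rwa [Finset.sum_disjSum, Finset.sum_disjSum] at happ
  -- Rewrite the goal as a sum over `P` and conclude.
  have hLHS : (∑ i : Fin n, ∑ t ∈ (Sdev i).filter (fun t => player t = i),
      (w t - (2/3) * w t)) = ∑ t ∈ P, (w t - 2/3 * w t) := by
    rw [← Finset.sum_fiberwise_of_maps_to
      (fun (x : E) (_ : x ∈ P) => Finset.mem_univ (player x)) (fun t => w t - 2/3 * w t)]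
    apply Finset.sum_congr rfl
    intro i _
    apply Finset.sum_congr _ (fun _ _ => rfl)
    ext t
    simp only [Finset.mem_filter, hPdef, Finset.mem_univ, true_and]
    constructor
    · rintro ⟨hdev, rfl⟩
      exact ⟨hdev, rfl⟩
    · rintro ⟨hdev, rfl⟩
      exact ⟨hdev, rfl⟩
  have e1 : ∑ t ∈ P, (w t - 2/3 * w t) = (1/2) * ∑ t ∈ P, 2/3 * w t := by
    rw [Finset.mul_sum]
    apply Finset.sum_congr rfl
    intro t _
    ring
  have e2 : ∑ t ∈ Sstar, (2:ℝ)/3 * w t = (2/3) * ∑ t ∈ Sstar, w t := by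
    rw [Finset.mul_sum]
  rw [hLHS, e1]
  rw [e2] at hmain
  linarith
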